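/- Let K[u] = ∂/∂x₁((A u² + B u + c₀)∂u/∂x₁) + ∂/∂x₂((β₂u² + β₁u + β₀)∂u/∂x₂) + (d₂u² + d₁u + d₀)∂u/∂x₁ + (λ₂u² + λ₁u + λ₀)∂u/∂x₂ + k₂u² + k₁u, where A = (−3b₀²β₂ + a₀d₂ + b₀λ₂)/(3a₀²) and B = (−2b₀²β₁ + a₀d₁ + b₀λ₁ − k₂)/(2a₀²), with a₀ ≠ 0. Then for every ν ∈ ℝ, u = ν e^{−(a₀x₁ + b₀x₂)} satisfies K[u] = (a₀²c₀ + b₀²β₀ − λ₀b₀ − d₀a₀ + k₁) u, so the one-dimensional space span{e^{−(a₀x₁+b₀x₂)}} is invariant under K. -/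

import Mathlib

open Real

lemma expAux (ν a c : ℝ) (t : ℝ) :
    HasDerivAt (fun s => ν * Real.exp (-(a * s + c))) (-a * (ν * Real.exp (-(a * t + c)))) t := by
  have h1 : HasDerivAt (fun s : ℝ => -(a * s + c)) (-a) t := by
    have h0 := (((hasDerivAt_id t).const_mul a).add_const c).neg
    rw [mul_one] at h0
    exact h0
  have := h1.exp.const_mul ν
  rw [show -a * (ν * Real.exp (-(a * t + c))) = ν * (Real.exp (-(a * t + c)) * -a) by ring]
  exact this

lemma derivAux (ν a c : ℝ) (t : ℝ) :
    deriv (fun s => ν * Real.exp (-(a * s + c))) t = -a * (ν * Real.exp (-(a * t + c))) :=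
  (expAux ν a c t).deriv

lemma polyAux (P Q R ν a c : ℝ) (t : ℝ) :
    deriv (fun s => (P * (ν * Real.exp (-(a * s + c))) ^ 2 + Q * (ν * Real.exp (-(a * s + c))) + R)
      * deriv (fun r => ν * Real.exp (-(a * r + c))) s) t =
    a ^ 2 * (3 * P * (ν * Real.exp (-(a * t + c))) ^ 3
      + 2 * Q * (ν * Real.exp (-(a * t + c))) ^ 2 + R * (ν * Real.exp (-(a * t + c)))) := by
  have hfun : (fun s => (P * (ν * Real.exp (-(a * s + c))) ^ 2 + Q * (ν * Real.exp (-(a * s + c))) + R)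
      * deriv (fun r => ν * Real.exp (-(a * r + c))) s)
      = fun s => (P * (ν * Real.exp (-(a * s + c))) ^ 2 + Q * (ν * Real.exp (-(a * s + c))) + R)
      * (-a * (ν * Real.exp (-(a * s + c)))) := by
    funext s; rw [derivAux]
  rw [hfun]
  have hg := expAux ν a c t
  set g := fun s => ν * Real.exp (-(a * s + c)) with hgdef
  have H := (((hg.pow 2).const_mul P |>.add (hg.const_mul Q) |>.add_const R).mul
      (hg.const_mul (-a)))
  erw [H.deriv]
  simp only [hgdef, Pi.add_apply, Pi.pow_apply]
  ring

/-- with the constrained diffusion coefficients, the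
one-dimensional space `span{e^{−(a₀x₁+b₀x₂)}}` is invariant under the cubic
operator K, which acts on it as multiplication by
`a₀²c₀ + b₀²β₀ − λ₀b₀ − d₀a₀ + k₁`. -/
theorem stmt3 (a₀ b₀ c₀ b0 b1 b2 d₀ d₁ d₂ l0 l1 l2 k₁ k₂ : ℝ) (ha₀ : a₀ ≠ 0)
    (A B : ℝ)
    (hA : A = (-3 * b₀ ^ 2 * b2 + a₀ * d₂ + b₀ * l2) / (3 * a₀ ^ 2))
    (hB : B = (-2 * b₀ ^ 2 * b1 + a₀ * d₁ + b₀ * l1 - k₂) / (2 * a₀ ^ 2))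
    (K : (ℝ → ℝ → ℝ) → ℝ → ℝ → ℝ)
    (hK : ∀ u : ℝ → ℝ → ℝ, ∀ x y : ℝ,
      K u x y =
        deriv (fun x' => (A * (u x' y) ^ 2 + B * u x' y + c₀) *
          deriv (fun x'' => u x'' y) x') x +
        deriv (fun y' => (b2 * (u x y') ^ 2 + b1 * u x y' + b0) *
          deriv (fun y'' => u x y'') y') y +
        (d₂ * (u x y) ^ 2 + d₁ * u x y + d₀) * deriv (fun x' => u x' y) x +
        (l2 * (u x y) ^ 2 + l1 * u x y + l0) * deriv (fun y' => u x y') y +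
        k₂ * (u x y) ^ 2 + k₁ * u x y) :
    ∀ ν : ℝ, ∀ x y : ℝ,
      K (fun x₁ x₂ => ν * exp (-(a₀ * x₁ + b₀ * x₂))) x y =
        (a₀ ^ 2 * c₀ + b₀ ^ 2 * b0 - l0 * b₀ - d₀ * a₀ + k₁) *
          (ν * exp (-(a₀ * x + b₀ * y))) := by
  intro ν x y
  rw [hK]
  have e1 : ∀ x' : ℝ, ν * Real.exp (-(a₀ * x' + b₀ * y))
      = ν * Real.exp (-(a₀ * x' + b₀ * y)) := fun _ => rfl
  -- x-derivative term
  have hx : deriv (fun x' => (A * (ν * Real.exp (-(a₀ * x' + b₀ * y))) ^ 2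
        + B * (ν * Real.exp (-(a₀ * x' + b₀ * y))) + c₀) *
      deriv (fun x'' => ν * Real.exp (-(a₀ * x'' + b₀ * y))) x') x
      = a₀ ^ 2 * (3 * A * (ν * Real.exp (-(a₀ * x + b₀ * y))) ^ 3
        + 2 * B * (ν * Real.exp (-(a₀ * x + b₀ * y))) ^ 2
        + c₀ * (ν * Real.exp (-(a₀ * x + b₀ * y)))) := polyAux A B c₀ ν a₀ (b₀ * y) x
  -- y-derivative term: rewrite -(a₀*x + b₀*y') = -(b₀*y' + a₀*x)
  have hy : deriv (fun y' => (b2 * (ν * Real.exp (-(a₀ * x + b₀ * y'))) ^ 2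
        + b1 * (ν * Real.exp (-(a₀ * x + b₀ * y'))) + b0) *
      deriv (fun y'' => ν * Real.exp (-(a₀ * x + b₀ * y''))) y') y
      = b₀ ^ 2 * (3 * b2 * (ν * Real.exp (-(b₀ * y + a₀ * x))) ^ 3
        + 2 * b1 * (ν * Real.exp (-(b₀ * y + a₀ * x))) ^ 2
        + b0 * (ν * Real.exp (-(b₀ * y + a₀ * x)))) := by
    have hcomm : ∀ y' : ℝ, -(a₀ * x + b₀ * y') = -(b₀ * y' + a₀ * x) := fun _ => by ring
    simp only [hcomm]
    exact polyAux b2 b1 b0 ν b₀ (a₀ * x) y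
  rw [hx, hy, derivAux ν a₀ (b₀ * y) x]
  have hcomm2 : -(b₀ * y + a₀ * x) = -(a₀ * x + b₀ * y) := by ring
  rw [hcomm2]
  have hdy : deriv (fun y' => ν * Real.exp (-(a₀ * x + b₀ * y'))) y
      = -b₀ * (ν * Real.exp (-(a₀ * x + b₀ * y))) := by
    have hcomm : ∀ y' : ℝ, -(a₀ * x + b₀ * y') = -(b₀ * y' + a₀ * x) := fun _ => by ring
    simp only [hcomm]
    rw [derivAux ν b₀ (a₀ * x) y]
  rw [hdy]
  have hA' : 3 * a₀ ^ 2 * A = -3 * b₀ ^ 2 * b2 + a₀ * d₂ + b₀ * l2 := by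
    rw [hA]; field_simp
  have hB' : 2 * a₀ ^ 2 * B = -2 * b₀ ^ 2 * b1 + a₀ * d₁ + b₀ * l1 - k₂ := by
    rw [hB]; field_simp
  set E := ν * Real.exp (-(a₀ * x + b₀ * y))
  linear_combination E ^ 3 * hA' + E ^ 2 * hB'
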